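/- arXiv:2306.05227 — 2 statements merged into one kernel-verified Lean document; each statement's English description precedes it below -/
import Mathlib

section
/- Strong Lagrange duality with an interior point: let X be a linear vector space, Ω ⊆ X convex, f : Ω → ℝ concave, g : X → ℝ convex, and suppose there exists x₁ ∈ Ω with g(x₁) < 0. If μ₀ = sup{ f(x) : x ∈ Ω, g(x) ≤ 0 } is finite, then μ₀ = min_{τ ≥ 0} sup_{x∈Ω} [ f(x) − τ g(x) ], and the minimum over τ is attained at some τ° ≥ 0. -/
theorem stmt14 {X : Type*} [AddCommGroup X] [Module ℝ X]
    (Om : Set X) (hOm : Convex ℝ Om) (f g : X → ℝ)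
    (hf : ConcaveOn ℝ Om f) (hg : ConvexOn ℝ Set.univ g)
    (x₁ : X) (hx₁ : x₁ ∈ Om) (hx₁g : g x₁ < 0)
    (hbdd : BddAbove (f '' {x | x ∈ Om ∧ g x ≤ 0}))
    (μ₀ : ℝ) (hμ₀ : μ₀ = sSup (f '' {x | x ∈ Om ∧ g x ≤ 0})) :
    ∃ τ : ℝ, 0 ≤ τ ∧
      (⨆ x : Om, ((f x - τ * g x : ℝ) : EReal)) = (μ₀ : EReal) ∧
      ∀ τ' : ℝ, 0 ≤ τ' →
        (μ₀ : EReal) ≤ ⨆ x : Om, ((f x - τ' * g x : ℝ) : EReal) := by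
  have hx₁f : x₁ ∈ {x | x ∈ Om ∧ g x ≤ 0} := ⟨hx₁, hx₁g.le⟩
  have hne : (Om).Nonempty := ⟨x₁, hx₁⟩
  haveI : Nonempty Om := ⟨⟨x₁, hx₁⟩⟩
  -- feasible values are ≤ μ₀
  have hfeas : ∀ x, x ∈ Om → g x ≤ 0 → f x ≤ μ₀ := by
    intro x hxo hxg
    rw [hμ₀]
    exact le_csSup hbdd ⟨x, ⟨hxo, hxg⟩, rfl⟩
  -- weak duality
  have weak : ∀ τ' : ℝ, 0 ≤ τ' →
      (μ₀ : EReal) ≤ ⨆ x : Om, ((f x - τ' * g x : ℝ) : EReal) := by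
    intro τ' hτ'
    set T := ⨆ x : Om, ((f ↑x - τ' * g ↑x : ℝ) : EReal) with hT
    have key : ∀ x, x ∈ Om → g x ≤ 0 → ((f x : ℝ) : EReal) ≤ T := by
      intro x hxo hxg
      have h1 : ((f x : ℝ) : EReal) ≤ ((f x - τ' * g x : ℝ) : EReal) := by
        apply EReal.coe_le_coe_iff.2
        nlinarith
      exact h1.trans (le_iSup (fun x : Om => ((f ↑x - τ' * g ↑x : ℝ) : EReal)) ⟨x, hxo⟩)
    rcases eq_top_or_lt_top T with h | h
    · simp [h]
    · have hbot : (⊥ : EReal) < T :=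
        lt_of_lt_of_le (by exact EReal.bot_lt_coe _) (key x₁ hx₁ hx₁g.le)
      obtain ⟨t, ht⟩ : ∃ t : ℝ, T = (t : EReal) := ⟨T.toReal, (EReal.coe_toReal h.ne hbot.ne').symm⟩
      have : ∀ y ∈ f '' {x | x ∈ Om ∧ g x ≤ 0}, y ≤ t := by
        rintro y ⟨x, ⟨hxo, hxg⟩, rfl⟩
        have := key x hxo hxg
        rw [ht] at this
        exact EReal.coe_le_coe_iff.1 this
      have hμt : μ₀ ≤ t := by
        rw [hμ₀]
        exact csSup_le ⟨f x₁, ⟨x₁, hx₁f, rfl⟩⟩ this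
      rw [ht]
      exact EReal.coe_le_coe_iff.2 hμt
  -- the separation argument
  set A : Set (ℝ × ℝ) := {p | ∃ x ∈ Om, g x ≤ p.1 ∧ p.2 ≤ f x} with hA
  set B : Set (ℝ × ℝ) := Set.Iio (0:ℝ) ×ˢ Set.Ioi μ₀ with hB
  have hAconv : Convex ℝ A := by
    rintro p ⟨x, hxo, hxg, hxf⟩ q ⟨y, hyo, hyg, hyf⟩ a b ha hb hab
    refine ⟨a • x + b • y, hOm hxo hyo ha hb hab, ?_, ?_⟩
    · have := hg.2 (Set.mem_univ x) (Set.mem_univ y) ha hb hab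
      have h2 : a * g x + b * g y ≤ a * p.1 + b * q.1 := by
        apply add_le_add <;> [exact mul_le_mul_of_nonneg_left hxg ha;
          exact mul_le_mul_of_nonneg_left hyg hb]
      calc g (a • x + b • y) ≤ a • g x + b • g y := this
        _ ≤ a * p.1 + b * q.1 := by simpa [smul_eq_mul] using h2
        _ = (a • p + b • q).1 := by simp [smul_eq_mul]
    · have := hf.2 hxo hyo ha hb hab
      have h2 : a * p.2 + b * q.2 ≤ a * f x + b * f y := by
        apply add_le_add <;> [exact mul_le_mul_of_nonneg_left hxf ha;
          exact mul_le_mul_of_nonneg_left hyf hb]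
      calc (a • p + b • q).2 = a * p.2 + b * q.2 := by simp [smul_eq_mul]
        _ ≤ a * f x + b * f y := h2
        _ ≤ f (a • x + b • y) := by simpa [smul_eq_mul] using this
  have hBconv : Convex ℝ B := (convex_Iio 0).prod (convex_Ioi μ₀)
  have hBopen : IsOpen B := isOpen_Iio.prod isOpen_Ioi
  have hdisj : Disjoint B A := by
    rw [Set.disjoint_left]
    rintro p ⟨hp1, hp2⟩ ⟨x, hxo, hxg, hxf⟩
    have hgx : g x ≤ 0 := hxg.trans hp1.le
    have := hfeas x hxo hgx
    simp only [Set.mem_Iio, Set.mem_Ioi] at hp1 hp2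
    linarith
  obtain ⟨L, c, hLB, hLA⟩ := geometric_hahn_banach_open hBconv hBopen hAconv hdisj
  set α := L (1, 0) with hα
  set β := L (0, 1) with hβ
  have hL : ∀ u v : ℝ, L (u, v) = α * u + β * v := by
    intro u v
    have : (u, v) = u • ((1:ℝ), (0:ℝ)) + v • ((0:ℝ), (1:ℝ)) := by
      simp [Prod.ext_iff]
    rw [this, map_add, map_smul, map_smul, smul_eq_mul, smul_eq_mul]
    ring
  -- facts from B side
  have hBmem : ∀ u v : ℝ, u < 0 → μ₀ < v → α * u + β * v < c := by
    intro u v hu hv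
    have := hLB (u, v) ⟨hu, hv⟩
    rwa [hL] at this
  have hAmem : ∀ x, x ∈ Om → c ≤ α * g x + β * f x := by
    intro x hxo
    have := hLA (g x, f x) ⟨x, hxo, le_rfl, le_rfl⟩
    rwa [hL] at this
  have hαnn : 0 ≤ α := by
    by_contra h
    push_neg at h
    set u := min (-1) ((c - β * (μ₀ + 1)) / α) with hu
    have hu0 : u < 0 := lt_of_le_of_lt (min_le_left _ _) (by norm_num)
    have h1 : α * u + β * (μ₀ + 1) < c := hBmem u (μ₀ + 1) hu0 (by linarith)
    have h2 : u ≤ (c - β * (μ₀ + 1)) / α := min_le_right _ _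
    have h4 : α * ((c - β * (μ₀ + 1)) / α) = c - β * (μ₀ + 1) :=
      mul_div_cancel₀ _ h.ne
    have h5 := mul_le_mul_of_nonpos_left h2 h.le
    linarith [h4, h5]
  have hβnp : β ≤ 0 := by
    by_contra h
    push_neg at h
    set v := max (μ₀ + 1) ((c + α) / β) with hv
    have hv0 : μ₀ < v := lt_of_lt_of_le (by linarith) (le_max_left _ _)
    have h1 : α * (-1) + β * v < c := hBmem (-1) v (by norm_num) hv0
    have h2 : (c + α) / β ≤ v := le_max_right _ _
    have h3 : c + α ≤ β * v := by
      rw [← div_le_iff₀' h]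
      exact h2
    linarith
  have hβμc : β * μ₀ ≤ c := by
    by_contra h
    push_neg at h
    set ε := (β * μ₀ - c) / (2 * (α - β + 1)) with hε
    have hD : 0 < α - β + 1 := by linarith
    have hε0 : 0 < ε := div_pos (by linarith) (by linarith)
    have h1 : α * (-ε) + β * (μ₀ + ε) < c := hBmem (-ε) (μ₀ + ε) (by linarith) (by linarith)
    have h2 : ε * (α - β) < β * μ₀ - c := by
      have : ε * (2 * (α - β + 1)) = β * μ₀ - c := by
        rw [hε]; exact div_mul_cancel₀ _ (ne_of_gt (by linarith))
      nlinarith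
    nlinarith
  have hβneg : β < 0 := by
    rcases hβnp.lt_or_eq with h | h
    · exact h
    · exfalso
      have h1 := hAmem x₁ hx₁
      have h2 := hβμc
      have h3 := hBmem (-1) (μ₀ + 1) (by norm_num) (by linarith)
      rw [h] at h1 h2 h3
      have hc0 : α * g x₁ ≤ 0 := mul_nonpos_of_nonneg_of_nonpos hαnn hx₁g.le
      have hαpos : 0 < α := by linarith
      linarith [mul_pos hαpos (neg_pos.2 hx₁g)]
  refine ⟨α / (-β), div_nonneg hαnn (by linarith), ?_, weak⟩
  set τ := α / (-β) with hτ
  have hβne : β ≠ 0 := ne_of_lt hβneg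
  have hτβ : β * τ = -α := by
    rw [hτ, mul_div_assoc', div_eq_iff (neg_ne_zero.2 hβne)]
    ring
  have hkey : ∀ x, x ∈ Om → f x - τ * g x ≤ μ₀ := by
    intro x hxo
    by_contra hcon
    push_neg at hcon
    have h3 : β * (f x - τ * g x) < β * μ₀ := mul_lt_mul_of_neg_left hcon hβneg
    have h4 : β * (f x - τ * g x) = β * f x + α * g x := by
      rw [mul_sub, ← mul_assoc, hτβ]; ring
    linarith [hAmem x hxo, hβμc, h3, h4]
  apply le_antisymm
  · apply iSup_le
    rintro ⟨x, hxo⟩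
    exact EReal.coe_le_coe_iff.2 (hkey x hxo)
  · exact weak τ (div_nonneg hαnn (by linarith))
end

section
/- For ω > 0 and symmetric positive definite S₊, V with ω > max eig(S₊V), the function ω ↦ −(ω/2) ln det(I − S₊V/ω) is convex on the interval (max eig(S₊V), ∞). -/
open Matrix
open scoped MatrixOrder

private lemma convexOn_congrOn {s : Set ℝ} {f g : ℝ → ℝ} (hg : ConvexOn ℝ s g)
    (h : ∀ x ∈ s, f x = g x) : ConvexOn ℝ s f := by
  refine ⟨hg.1, fun x hx y hy a b ha hb hab => ?_⟩
  rw [h _ hx, h _ hy, h _ (hg.1 hx hy ha hb hab)]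
  exact hg.2 hx hy ha hb hab

private lemma convexOn_finsum {ι : Type*} (t : Finset ι) {s : Set ℝ} (hs : Convex ℝ s)
    {f : ι → ℝ → ℝ} (h : ∀ i ∈ t, ConvexOn ℝ s (f i)) :
    ConvexOn ℝ s (fun x => ∑ i ∈ t, f i x) := by
  classical
  induction t using Finset.cons_induction with
  | empty => simpa using convexOn_const 0 hs
  | cons i t hi ih =>
      simp only [Finset.sum_cons]
      exact (h i (Finset.mem_cons_self _ _)).add
        (ih fun j hj => h j (Finset.mem_cons.2 (Or.inr hj)))

/-- Convexity of `ω ↦ -(ω/2) log (1 - λ/ω)` on `(m, ∞)` for `0 < λ ≤ m`. -/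
private lemma aux_convex {lam m : ℝ} (hlam : 0 < lam) (hle : lam ≤ m) :
    ConvexOn ℝ (Set.Ioi m) (fun ω => -(ω / 2) * Real.log (1 - ω⁻¹ * lam)) := by
  set L : ℝ → ℝ := fun ω => Real.log (ω - lam) - Real.log ω with hL_def
  set M : ℝ → ℝ := fun ω => (ω - lam)⁻¹ - ω⁻¹ with hM_def
  set F : ℝ → ℝ := fun ω => -(ω / 2) * L ω with hF_def
  set F' : ℝ → ℝ := fun ω => -(1 / 2) * L ω + -(ω / 2) * M ω with hF'_def
  have hm0 : 0 < m := lt_of_lt_of_le hlam hle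
  have basics : ∀ ω ∈ Set.Ioi m, 0 < ω - lam ∧ 0 < ω := by
    intro ω hω
    have hω' : m < ω := hω
    constructor <;> linarith
  have hderivF : ∀ ω ∈ Set.Ioi m, HasDerivAt F (F' ω) ω := by
    intro ω hω
    obtain ⟨h1, h2⟩ := basics ω hω
    have hsub : HasDerivAt (fun ω : ℝ => ω - lam) 1 ω := (hasDerivAt_id ω).sub_const lam
    have hlog1 : HasDerivAt (fun ω : ℝ => Real.log (ω - lam)) (1 / (ω - lam)) ω := by
      simpa using hsub.log h1.ne'
    have hlog2 : HasDerivAt Real.log ω⁻¹ ω := Real.hasDerivAt_log h2.ne'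
    have hL : HasDerivAt L (1 / (ω - lam) - ω⁻¹) ω := hlog1.sub hlog2
    have hc : HasDerivAt (fun ω : ℝ => -(ω / 2)) (-(1 / 2)) ω := by
      exact ((hasDerivAt_id' ω).div_const 2).neg
    have this : HasDerivAt (fun y => -(y / 2) * L y) _ ω := hc.mul hL
    convert this using 1
    simp only [hF'_def, hM_def, hL_def]
    field_simp
  have hderivF' : ∀ ω ∈ Set.Ioi m,
      HasDerivAt F' (lam ^ 2 / (2 * (ω - lam) ^ 2 * ω)) ω := by
    intro ω hω
    obtain ⟨h1, h2⟩ := basics ω hω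
    have hsub : HasDerivAt (fun ω : ℝ => ω - lam) 1 ω := (hasDerivAt_id ω).sub_const lam
    have hlog1 : HasDerivAt (fun ω : ℝ => Real.log (ω - lam)) (1 / (ω - lam)) ω := by
      simpa using hsub.log h1.ne'
    have hlog2 : HasDerivAt Real.log ω⁻¹ ω := Real.hasDerivAt_log h2.ne'
    have hL : HasDerivAt L (1 / (ω - lam) - ω⁻¹) ω := hlog1.sub hlog2
    have hinv1 : HasDerivAt (fun ω : ℝ => (ω - lam)⁻¹) (-1 / (ω - lam) ^ 2) ω := by
      exact hsub.inv h1.ne'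
    have hinv2 : HasDerivAt (fun ω : ℝ => ω⁻¹) (-1 / ω ^ 2) ω := by
      exact (hasDerivAt_id' ω).inv h2.ne'
    have hM : HasDerivAt M (-1 / (ω - lam) ^ 2 - -1 / ω ^ 2) ω := hinv1.sub hinv2
    have hc : HasDerivAt (fun ω : ℝ => -(ω / 2)) (-(1 / 2)) ω := by
      exact ((hasDerivAt_id' ω).div_const 2).neg
    have this : HasDerivAt (fun y => -(1 / 2) * L y + -(y / 2) * M y) _ ω :=
      (hL.const_mul (-(1 / 2) : ℝ)).add (hc.mul hM)
    convert this using 1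
    simp only [hM_def]
    field_simp
    ring
  have hconvF : ConvexOn ℝ (Set.Ioi m) F := by
    refine convexOn_of_hasDerivWithinAt2_nonneg (f' := F')
      (f'' := fun ω => lam ^ 2 / (2 * (ω - lam) ^ 2 * ω)) (convex_Ioi m)
      (fun ω hω => (hderivF ω hω).continuousAt.continuousWithinAt) ?_ ?_ ?_
    · intro ω hω
      rw [interior_Ioi] at hω ⊢
      exact (hderivF ω hω).hasDerivWithinAt
    · intro ω hω
      rw [interior_Ioi] at hω ⊢
      exact (hderivF' ω hω).hasDerivWithinAt
    · intro ω hω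
      rw [interior_Ioi] at hω
      obtain ⟨h1, h2⟩ := basics ω hω
      have : 0 < 2 * (ω - lam) ^ 2 * ω := by positivity
      positivity
  refine convexOn_congrOn hconvF ?_
  intro ω hω
  obtain ⟨h1, h2⟩ := basics ω hω
  have h3 : 1 - ω⁻¹ * lam = (ω - lam) / ω := by field_simp
  simp only [hF_def, hL_def]
  rw [h3, Real.log_div h1.ne' h2.ne']

set_option maxHeartbeats 1000000 in
theorem stmt17 {n : ℕ} (Sp V : Matrix (Fin n) (Fin n) ℝ)
    (hSp : Sp.PosDef) (hV : V.PosDef) (m : ℝ)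
    (hm : m ∈ spectrum ℝ (Sp * V)) (hmax : ∀ μ ∈ spectrum ℝ (Sp * V), μ ≤ m) :
    ConvexOn ℝ (Set.Ioi m)
      (fun ω => -(ω / 2) * Real.log ((1 - ω⁻¹ • (Sp * V)).det)) := by
  classical
  set R : Matrix (Fin n) (Fin n) ℝ := CFC.sqrt Sp with hR_def
  have hRH : R.IsHermitian := (CFC.sqrt_nonneg Sp).posSemidef.1
  have hRR : R * R = Sp := CFC.sqrt_mul_sqrt_self Sp hSp.posSemidef.nonneg
  have hRunit : IsUnit R := by
    have hdet : R.det * R.det = Sp.det := by rw [← Matrix.det_mul, hRR]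
    have : R.det ≠ 0 := by
      intro h
      rw [h, mul_zero] at hdet
      exact hSp.det_pos.ne' hdet.symm
    exact (Matrix.isUnit_iff_isUnit_det R).2 this.isUnit
  have hRinv : R * R⁻¹ = 1 := Matrix.mul_nonsing_inv R ((Matrix.isUnit_iff_isUnit_det R).1 hRunit)
  set B : Matrix (Fin n) (Fin n) ℝ := R * V * R with hB_def
  have key : Sp * V = R * B * R⁻¹ := by
    rw [hB_def, ← hRR]
    rw [show R * (R * V * R) * R⁻¹ = (R * R) * V * (R * R⁻¹) by noncomm_ring, hRinv, mul_one]
  have hB : B.PosDef := by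
    refine Matrix.posDef_iff_dotProduct_mulVec.2 ⟨?_, fun x hx => ?_⟩
    · show (R * V * R)ᴴ = R * V * R
      rw [Matrix.conjTranspose_mul, Matrix.conjTranspose_mul, hRH.eq, hV.1.eq]
      exact (mul_assoc R V R).symm
    · have hRx : R *ᵥ x ≠ 0 := by
        intro h
        exact hx (Matrix.mulVec_injective_iff_isUnit.mpr hRunit (h.trans (Matrix.mulVec_zero R).symm))
      have hgoal : 0 < dotProduct (star x) ((Rᴴ * V * R) *ᵥ x) := by
        simpa only [Matrix.star_mulVec, Matrix.dotProduct_mulVec, Matrix.vecMul_vecMul]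
          using hV.dotProduct_mulVec_pos hRx
      rwa [hRH.eq] at hgoal
  set ev : Fin n → ℝ := hB.1.eigenvalues with hev_def
  have hspec : spectrum ℝ (Sp * V) = spectrum ℝ B := by
    rw [key, ← hRunit.unit_spec, ← Matrix.coe_units_inv]
    exact spectrum.units_conjugate
  have hevle : ∀ i, ev i ≤ m := fun i =>
    hmax _ (by rw [hspec]; exact hB.1.eigenvalues_mem_spectrum_real i)
  have hevpos : ∀ i, 0 < ev i := hB.eigenvalues_pos
  have hm0 : 0 < m := by
    rw [hspec, hB.1.spectrum_real_eq_range_eigenvalues] at hm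
    obtain ⟨i, hi⟩ := hm
    exact hi ▸ hevpos i
  -- determinant formula on the domain
  have hdet : ∀ ω ∈ Set.Ioi m, (1 - ω⁻¹ • (Sp * V)).det = ∏ i, (1 - ω⁻¹ * ev i) := by
    intro ω hω
    have step1 : (1 : Matrix (Fin n) (Fin n) ℝ) - ω⁻¹ • (Sp * V)
        = R * (1 - ω⁻¹ • B) * R⁻¹ := by
      rw [key, mul_sub, sub_mul, mul_one, hRinv, mul_smul_comm, smul_mul_assoc]
    rw [step1, Matrix.det_conj hRunit]
    set U : Matrix (Fin n) (Fin n) ℝ := (hB.1.eigenvectorUnitary : Matrix (Fin n) (Fin n) ℝ) with hU_def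
    have hUU : U * star U = 1 := Matrix.mem_unitaryGroup_iff.mp hB.1.eigenvectorUnitary.2
    have step2 : (1 : Matrix (Fin n) (Fin n) ℝ) - ω⁻¹ • B
        = U * (1 - ω⁻¹ • diagonal ev) * star U := by
      conv_lhs => rw [hB.1.spectral_theorem]
      rw [mul_sub, sub_mul, mul_one, hUU, mul_smul_comm, smul_mul_assoc, hU_def, hev_def]
      simp [RCLike.ofReal_real_eq_id]
    rw [step2, Matrix.det_mul, Matrix.det_mul]
    have hUdet : U.det * (star U).det = 1 := by
      rw [← Matrix.det_mul, hUU, Matrix.det_one]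
    have hdiag : (1 : Matrix (Fin n) (Fin n) ℝ) - ω⁻¹ • diagonal ev
        = diagonal (fun i => 1 - ω⁻¹ * ev i) := by
      rw [← Matrix.diagonal_one, ← Matrix.diagonal_smul, Matrix.diagonal_sub]
      rfl
    rw [hdiag, Matrix.det_diagonal, mul_right_comm, hUdet, one_mul]
  -- transfer to a sum of convex functions
  have hfac : ∀ ω ∈ Set.Ioi m, ∀ i, 0 < 1 - ω⁻¹ * ev i := by
    intro ω hω i
    have h2 : (0 : ℝ) < ω := lt_trans hm0 hω
    have : ev i / ω < 1 := (div_lt_one h2).2 (lt_of_le_of_lt (hevle i) hω)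
    rw [inv_mul_eq_div]
    linarith
  refine convexOn_congrOn
    (convexOn_finsum Finset.univ (convex_Ioi m)
      (fun i _ => aux_convex (hevpos i) (hevle i))) ?_
  intro ω hω
  rw [hdet ω hω, Real.log_prod (fun i _ => (hfac ω hω i).ne'), Finset.mul_sum]
end
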